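/- Let G be a finite group with a unique conjugacy class of involutions, H ≤ G of order 2, and E the extension of the coinduced module W (from the trivial 𝔽₂H-module of order 2) by G defined by the cocycle α as above. If (g,f) ∈ E satisfies g conjugate to h in G, then (g,f)² ≠ 1. -/

import Mathlib

open Classical in
theorem stmt_16 {G : Type*} [Group G] [Fintype G]
    (huniq : ∀ a b : G, a ^ 2 = 1 → a ≠ 1 → b ^ 2 = 1 → b ≠ 1 → IsConj a b)
    (H : Subgroup G)
    (h : G) (hmem : h ∈ H) (hne : h ≠ 1) (hord : ∀ x ∈ H, x = 1 ∨ x = h)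
    (Y : Set G)
    (htrans : ∀ g : G, ∃! p : Y × H, (p.1 : G) * (p.2 : G) = g)
    (π : G → H)
    (hπ : ∀ (y : Y) (h' : H), π ((y : G) * (h' : G)) = h')
    (hπ1 : π 1 = 1)
    (β : H → H → ZMod 2)
    (hβ : ∀ a b : H, β a b = if (a : G) = h ∧ (b : G) = h then 1 else 0)
    (α : G → G → G → ZMod 2)
    (hα : ∀ g₁ g₂ g : G,
      α g₁ g₂ g = β (π (g₁ * g₂ * g) * (π (g₂ * g))⁻¹) (π (g₂ * g) * (π g)⁻¹)) :
    ∀ (g : G) (f : G → ZMod 2), IsConj g h →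
      (∀ g' : G, ∀ h' ∈ H, f (g' * h') = f g') →
      (g * g, (fun g' => f (g * g')) + f + α g g) ≠ ((1 : G), (0 : G → ZMod 2)) := by
  intro g f hconj hf heq
  -- h has order 2
  have h2 : h * h = 1 := by
    rcases hord (h * h) (H.mul_mem hmem hmem) with h' | h'
    · exact h'
    · exact absurd (mul_right_cancel (a := h) (by rw [h', one_mul])) hne
  -- get c with c * h * c⁻¹ = g
  obtain ⟨c, hc⟩ := isConj_iff.mp hconj.symm
  have hg2 : g * g = 1 := by
    rw [← hc]; group
    rw [mul_assoc c, h2, mul_one]; group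
  have hgc : g * c = c * h := by rw [← hc]; group
  -- decomposition of c
  obtain ⟨⟨y, h'⟩, hyh', _⟩ := htrans c
  have hπc : π c = h' := by rw [← hyh']; exact hπ y h'
  set HH : H := ⟨h, hmem⟩ with hHH
  have hπch : π (c * h) = h' * HH := by
    rw [← hyh', mul_assoc]
    exact hπ y (h' * HH)
  -- π c ∈ {1, h}, so conjugation by it fixes HH
  have hconjfix : ∀ s : H, ((s * HH * s⁻¹ : H) : G) = h := by
    intro s
    rcases hord (s : G) s.2 with hs | hs
    · push_cast
      rw [hs]; simp [hHH]
    · push_cast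
      rw [hs]; simp [hHH]
  have hinv : (HH⁻¹ : H) = HH := by
    ext
    push_cast
    rw [inv_eq_iff_mul_eq_one]
    exact h2
  -- evaluate second component at c
  have h2nd := congrFun (congrArg Prod.snd heq) c
  simp only [Pi.add_apply, Pi.zero_apply] at h2nd
  rw [hα, hg2, one_mul, hgc, hf c h hmem, hπch, hπc, hβ] at h2nd
  have e1 : ((h' * (h' * HH)⁻¹ : H) : G) = h := by
    rw [mul_inv_rev, ← mul_assoc, hinv]
    exact hconjfix h'
  have e2 : ((h' * HH * h'⁻¹ : H) : G) = h := hconjfix h'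
  rw [if_pos ⟨e1, e2⟩] at h2nd
  rw [CharTwo.add_self_eq_zero, zero_add] at h2nd
  exact one_ne_zero h2nd
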